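/- (Hamming-type measurement bound) Let C be an 𝔽₂-subspace of V with C ⊆ C^⊥ₛ and dim_{𝔽₂} C = n − k, let d ≥ 1, C(d−1) := {c ∈ C : w_Q(c) ≤ d−1}, s := dim_{𝔽₂} span(C(d−1)), D := C(d−1)^⊥ₛ, and let D̄ be the image of D in V/C^⊥ₛ. Let t := ⌊(d−1)/2⌋ and ME(t) := {ē ∈ D̄ : ‖ē‖ ≤ t}. If Ω ⊆ D̄ is a set of cosets whose pairwise quotient distances are all ≥ d, then 2^k · |Ω| · |ME(t)| ≤ 2^{n−s}. -/

import Mathlib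

open Finset

/-- `V = 𝔽₂ⁿ × 𝔽₂ⁿ`, elements written `(a|b)`. -/
abbrev Vn (n : ℕ) : Type := (Fin n → ZMod 2) × (Fin n → ZMod 2)

/-- The symplectic inner product `((a|b),(a'|b'))ₛ = a·b' + a'·b`. -/
def symp {n : ℕ} (v w : Vn n) : ZMod 2 :=
  (∑ i, v.1 i * w.2 i) + (∑ i, w.1 i * v.2 i)

lemma symp_add_left {n : ℕ} (a b s : Vn n) : symp (a + b) s = symp a s + symp b s := by
  simp only [symp, Prod.fst_add, Prod.snd_add, Pi.add_apply, add_mul, mul_add,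
    Finset.sum_add_distrib]
  ring

lemma symp_smul_left {n : ℕ} (c : ZMod 2) (v s : Vn n) : symp (c • v) s = c * symp v s := by
  simp only [symp, Prod.smul_fst, Prod.smul_snd, Pi.smul_apply, smul_eq_mul, mul_add,
    Finset.mul_sum]
  congr 1
  · exact Finset.sum_congr rfl fun i _ => by ring
  · exact Finset.sum_congr rfl fun i _ => by ring

/-- The symplectic orthogonal `S^⊥ₛ` of a subset `S ⊆ V`, as an `𝔽₂`-subspace of `V`. -/
def sympOrtho {n : ℕ} (S : Set (Vn n)) : Submodule (ZMod 2) (Vn n) where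
  carrier := {v | ∀ s ∈ S, symp v s = 0}
  zero_mem' := by intro s hs; simp [symp]
  add_mem' := by
    intro a b ha hb s hs
    rw [Set.mem_setOf_eq] at *
    rw [symp_add_left, ha s hs, hb s hs, add_zero]
  smul_mem' := by
    intro c v hv s hs
    rw [Set.mem_setOf_eq] at *
    rw [symp_smul_left, hv s hs, mul_zero]

/-- `ε : 𝔽₂ → ℂ`, `ε(0) = 1`, `ε(1) = -1`. -/
def eps (x : ZMod 2) : ℂ := if x = 0 then 1 else -1

/-- Quantum weight of `(a|b)`: number of positions `i` with `(aᵢ,bᵢ) ≠ (0,0)`. -/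
def wQ {n : ℕ} (v : Vn n) : ℕ :=
  (Finset.univ.filter fun i => (v.1 i, v.2 i) ≠ ((0 : ZMod 2), (0 : ZMod 2))).card

/-- Quotient minimum norm `‖x̄‖ = min_{v ∈ x̄} w_Q(v)` on `V ⧸ H`. -/
noncomputable def qnorm {n : ℕ} (H : Submodule (ZMod 2) (Vn n)) (x : Vn n ⧸ H) : ℕ :=
  sInf {m | ∃ v : Vn n, (Submodule.Quotient.mk v : Vn n ⧸ H) = x ∧ wQ v = m}

/-- Quotient distance `d(x̄,ȳ) = ‖x̄ - ȳ‖` on `V ⧸ H`. -/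
noncomputable def qdist {n : ℕ} (H : Submodule (ZMod 2) (Vn n)) (x y : Vn n ⧸ H) : ℕ :=
  qnorm H (x - y)

/-- The operator `W(a,b)` acting on functions `𝔽₂ⁿ → ℂ`: `(W(a,b)f)(x) = ε(b·x)·f(x+a)`. -/
def Wop {n : ℕ} (a b : Fin n → ZMod 2) (f : (Fin n → ZMod 2) → ℂ) : (Fin n → ZMod 2) → ℂ :=
  fun x => eps (∑ i, b i * x i) * f (x + a)

/-- The joint eigenspace `Q(i)` of the operators `W(c₁,c₂)`, `(c₁|c₂) ∈ C`. -/
def Qset {n : ℕ} (C : Submodule (ZMod 2) (Vn n)) (i : Vn n) : Set ((Fin n → ZMod 2) → ℂ) :=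
  {f | ∀ c ∈ C, ∀ x, Wop c.1 c.2 f x = eps (symp i c) * f x}

/-! ### Auxiliary lemmas -/

lemma my_symp_comm {n : ℕ} (v w : Vn n) : symp v w = symp w v := by
  simp only [symp]; ring

/-- The symplectic form as a bilinear form. -/
noncomputable def mySympB (n : ℕ) : LinearMap.BilinForm (ZMod 2) (Vn n) :=
  LinearMap.mk₂ (ZMod 2) symp symp_add_left symp_smul_left
    (fun a b c => by rw [my_symp_comm, symp_add_left, my_symp_comm b a, my_symp_comm c a])
    (fun c a b => by rw [my_symp_comm, symp_smul_left, my_symp_comm, smul_eq_mul])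

@[simp] lemma mySympB_apply {n : ℕ} (v w : Vn n) : mySympB n v w = symp v w := rfl

lemma mySympB_refl {n : ℕ} : (mySympB n).IsRefl := by
  intro x y h
  simpa [my_symp_comm] using h

lemma mySympB_nondeg {n : ℕ} : (mySympB n).Nondegenerate := by
  refine (LinearMap.IsRefl.nondegenerate_iff_separatingLeft mySympB_refl).mpr ?_
  intro v hv
  have h1 : ∀ i, v.1 i = 0 := by
    intro i
    have := hv (0, Pi.single i 1)
    simpa [symp, Pi.single_apply, mul_ite, Finset.sum_ite_eq] using this
  have h2 : ∀ i, v.2 i = 0 := by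
    intro i
    have := hv (Pi.single i 1, 0)
    simpa [symp, Pi.single_apply, ite_mul, Finset.sum_ite_eq] using this
  ext i
  · exact h1 i
  · exact h2 i

lemma my_sympOrtho_eq {n : ℕ} (S : Set (Vn n)) :
    sympOrtho S = (mySympB n).orthogonal (Submodule.span (ZMod 2) S) := by
  ext v
  constructor
  · intro hv w hw
    induction hw using Submodule.span_induction with
    | mem x hx => show symp x v = 0; rw [my_symp_comm]; exact hv x hx
    | zero => show symp 0 v = 0; rw [my_symp_comm]; simp [symp]
    | add x y _ _ hx hy =>
      show symp (x + y) v = 0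
      rw [symp_add_left]
      rw [show symp x v = 0 from hx, show symp y v = 0 from hy, add_zero]
    | smul c x _ hx =>
      show symp (c • x) v = 0
      rw [symp_smul_left, show symp x v = 0 from hx, mul_zero]
  · intro hv s hs
    rw [my_symp_comm]
    exact hv s (Submodule.subset_span hs)

lemma my_wQ_neg {n : ℕ} (v : Vn n) : wQ (-v) = wQ v := by
  unfold wQ
  congr 1
  apply Finset.filter_congr
  intro i _
  simp [Prod.ext_iff, neg_eq_zero]

lemma my_wQ_sub_le {n : ℕ} (u v : Vn n) : wQ (u - v) ≤ wQ u + wQ v := by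
  unfold wQ
  refine le_trans (Finset.card_le_card ?_) (Finset.card_union_le _ _)
  intro i hi
  simp only [Finset.mem_filter, Finset.mem_union, Finset.mem_univ, true_and] at *
  by_contra h
  push_neg at h
  obtain ⟨h1, h2⟩ := h
  simp only [not_not, Prod.mk.injEq] at h1 h2
  exact hi (by simp [Prod.ext_iff, h1.1, h1.2, h2.1, h2.2])

lemma my_qnorm_spec {n : ℕ} (H : Submodule (ZMod 2) (Vn n)) (x : Vn n ⧸ H) :
    ∃ v : Vn n, (Submodule.Quotient.mk v : Vn n ⧸ H) = x ∧ wQ v = qnorm H x := by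
  have hne : {m | ∃ v : Vn n, (Submodule.Quotient.mk v : Vn n ⧸ H) = x ∧ wQ v = m}.Nonempty := by
    obtain ⟨v, hv⟩ := Submodule.Quotient.mk_surjective H x
    exact ⟨wQ v, v, hv, rfl⟩
  exact Nat.sInf_mem hne

lemma my_qnorm_mk_le {n : ℕ} (H : Submodule (ZMod 2) (Vn n)) (v : Vn n) :
    qnorm H (Submodule.Quotient.mk v) ≤ wQ v :=
  Nat.sInf_le ⟨v, rfl, rfl⟩

lemma my_qnorm_sub_le {n : ℕ} (H : Submodule (ZMod 2) (Vn n)) (a b : Vn n ⧸ H) :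
    qnorm H (a - b) ≤ qnorm H a + qnorm H b := by
  obtain ⟨u, hu, hwu⟩ := my_qnorm_spec H a
  obtain ⟨v, hv, hwv⟩ := my_qnorm_spec H b
  have hmk : (Submodule.Quotient.mk (u - v) : Vn n ⧸ H) = a - b := by
    rw [Submodule.Quotient.mk_sub, hu, hv]
  calc qnorm H (a - b) = qnorm H (Submodule.Quotient.mk (u - v)) := by rw [hmk]
    _ ≤ wQ (u - v) := my_qnorm_mk_le H _
    _ ≤ wQ u + wQ v := my_wQ_sub_le u v
    _ = qnorm H a + qnorm H b := by rw [hwu, hwv]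

lemma my_card_zmod2 (M : Type*) [AddCommGroup M] [Module (ZMod 2) M] [Finite M] :
    Nat.card M = 2 ^ Module.finrank (ZMod 2) M := by
  have : Fintype M := Fintype.ofFinite M
  rw [Nat.card_eq_fintype_card, Module.card_eq_pow_finrank (K := ZMod 2), ZMod.card]

set_option maxHeartbeats 1000000 in
set_option synthInstance.maxHeartbeats 400000 in
/-- Generalized sphere-packing bound in the quotient. -/
lemma my_packing {n d : ℕ} (hd : 1 ≤ d) (H D : Submodule (ZMod 2) (Vn n)) (hHD : H ≤ D)
    (Dbar : Set (Vn n ⧸ H)) (hDbar' : Dbar = ((D.map H.mkQ : Submodule (ZMod 2) (Vn n ⧸ H)) : Set (Vn n ⧸ H)))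
    (Ω : Set (Vn n ⧸ H)) (hΩD : Ω ⊆ Dbar)
    (hdist : ∀ x ∈ Ω, ∀ y ∈ Ω, x ≠ y → d ≤ qdist H x y) :
    Nat.card Ω * Nat.card {e : Vn n ⧸ H | e ∈ Dbar ∧ qnorm H e ≤ (d - 1) / 2}
      ≤ 2 ^ (Module.finrank (ZMod 2) D - Module.finrank (ZMod 2) H) := by
  classical
  set t := (d - 1) / 2 with ht
  set ME := {e : Vn n ⧸ H | e ∈ Dbar ∧ qnorm H e ≤ t} with hMEdef
  -- rank-nullity for the restriction of mkQ to D
  have hrn : Module.finrank (ZMod 2) (D.map H.mkQ) + Module.finrank (ZMod 2) H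
      = Module.finrank (ZMod 2) D := by
    have h1 := LinearMap.finrank_range_add_finrank_ker (H.mkQ.comp D.subtype)
    have hr : LinearMap.range (H.mkQ.comp D.subtype) = D.map H.mkQ := by
      rw [LinearMap.range_comp, Submodule.range_subtype]
    have hk2 : LinearMap.ker (H.mkQ.comp D.subtype) = Submodule.comap D.subtype H := by
      rw [LinearMap.ker_comp, Submodule.ker_mkQ]
    rw [hr, hk2] at h1
    have h2 : Module.finrank (ZMod 2) (Submodule.comap D.subtype H)
        = Module.finrank (ZMod 2) H :=
      LinearEquiv.finrank_eq (Submodule.comapSubtypeEquivOfLe hHD)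
    omega
  have hmem : ∀ (x : Vn n ⧸ H), x ∈ Ω → ∀ (e : Vn n ⧸ H), e ∈ ME → x + e ∈ Dbar := by
    intro x hx e he
    have hx' : x ∈ D.map H.mkQ := by have h := hΩD hx; rwa [hDbar'] at h
    have he' : e ∈ D.map H.mkQ := by have h := he.1; rwa [hDbar'] at h
    have : x + e ∈ D.map H.mkQ := add_mem hx' he'
    rw [hDbar']
    exact this
  have h2t : t + t ≤ d - 1 := by
    have := Nat.div_mul_le_self (d - 1) 2
    omega
  have hinj : Function.Injective
      (fun p : Ω × ME => (⟨p.1.1 + p.2.1, hmem p.1.1 p.1.2 p.2.1 p.2.2⟩ : Dbar)) := by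
    rintro ⟨⟨x, hx⟩, ⟨e, he⟩⟩ ⟨⟨y, hy⟩, ⟨f, hf⟩⟩ hpq
    simp only [Subtype.mk.injEq] at hpq
    have hxy : x = y := by
      by_contra hne
      have hdge := hdist x hx y hy hne
      have hsub : x - y = f - e := by
        rw [sub_eq_sub_iff_add_eq_add, hpq, add_comm]
      have : qdist H x y ≤ t + t := by
        rw [qdist, hsub]
        calc qnorm H (f - e) ≤ qnorm H f + qnorm H e := my_qnorm_sub_le H f e
          _ ≤ t + t := Nat.add_le_add hf.2 he.2
      omega
    subst hxy
    have hef : e = f := add_left_cancel hpq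
    simp only [hef]
  have hcard1 : Nat.card Ω * Nat.card ME ≤ Nat.card Dbar := by
    calc Nat.card Ω * Nat.card ME = Nat.card (Ω × ME) := (Nat.card_prod _ _).symm
      _ ≤ Nat.card Dbar := Nat.card_le_card_of_injective _ hinj
  have hcardD : Nat.card Dbar = 2 ^ Module.finrank (ZMod 2) (D.map H.mkQ) := by
    rw [hDbar', SetLike.coe_sort_coe]
    exact my_card_zmod2 _
  have : Module.finrank (ZMod 2) (D.map H.mkQ)
      = Module.finrank (ZMod 2) D - Module.finrank (ZMod 2) H := by omega
  rw [← this, ← hcardD]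
  exact hcard1

/-- **Hamming-type measurement bound.** For a self-orthogonal `C` with
`dim C = n - k`, `s = dim span C(d-1)`, `D = C(d-1)^⊥ₛ`, `D̄` its image in `V ⧸ C^⊥ₛ`,
`t = ⌊(d-1)/2⌋` and `ME(t) = {ē ∈ D̄ : ‖ē‖ ≤ t}`: any `Ω ⊆ D̄` with pairwise quotient
distances `≥ d` satisfies `2^k · |Ω| · |ME(t)| ≤ 2^(n-s)`. -/
theorem hamming_measurement_bound (n k d : ℕ) (hn : 0 < n) (hk : k ≤ n) (hd : 1 ≤ d)
    (C : Submodule (ZMod 2) (Vn n)) (hself : C ≤ sympOrtho (C : Set (Vn n)))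
    (hC : Module.finrank (ZMod 2) C = n - k) (s : ℕ)
    (hs : s = Module.finrank (ZMod 2)
      (Submodule.span (ZMod 2) {c : Vn n | c ∈ C ∧ wQ c ≤ d - 1}))
    (Dbar : Set (Vn n ⧸ sympOrtho (C : Set (Vn n))))
    (hDbar : Dbar = (fun v => (Submodule.Quotient.mk v : Vn n ⧸ sympOrtho (C : Set (Vn n)))) ''
      (sympOrtho {c : Vn n | c ∈ C ∧ wQ c ≤ d - 1} : Set (Vn n)))
    (Ω : Set (Vn n ⧸ sympOrtho (C : Set (Vn n)))) (hΩD : Ω ⊆ Dbar)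
    (hdist : ∀ x ∈ Ω, ∀ y ∈ Ω, x ≠ y → d ≤ qdist (sympOrtho (C : Set (Vn n))) x y) :
    2 ^ k * Nat.card Ω *
        Nat.card {e : Vn n ⧸ sympOrtho (C : Set (Vn n)) | e ∈ Dbar ∧
          qnorm (sympOrtho (C : Set (Vn n))) e ≤ (d - 1) / 2}
      ≤ 2 ^ (n - s) := by
    classical
  have hDbar' : Dbar = (((sympOrtho {c : Vn n | c ∈ C ∧ wQ c ≤ d - 1}).map
      (sympOrtho (C : Set (Vn n))).mkQ :
      Submodule (ZMod 2) (Vn n ⧸ sympOrtho (C : Set (Vn n)))) :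
      Set (Vn n ⧸ sympOrtho (C : Set (Vn n)))) := by
    rw [hDbar, Submodule.map_coe]
    rfl
  have hHD : sympOrtho (C : Set (Vn n)) ≤ sympOrtho {c : Vn n | c ∈ C ∧ wQ c ≤ d - 1} := by
    intro v hv c hc
    exact hv c hc.1
  have hpack := my_packing (d := d) hd (sympOrtho (C : Set (Vn n)))
    (sympOrtho {c : Vn n | c ∈ C ∧ wQ c ≤ d - 1}) hHD Dbar hDbar' Ω hΩD hdist
  have hVrank : Module.finrank (ZMod 2) (Vn n) = n + n := by
    simp [Module.finrank_prod]
  have hHrank : Module.finrank (ZMod 2) (sympOrtho (C : Set (Vn n))) = (n + n) - (n - k) := by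
    have h : sympOrtho (C : Set (Vn n)) = (mySympB n).orthogonal C := by
      rw [my_sympOrtho_eq, Submodule.span_eq]
    rw [h, LinearMap.BilinForm.finrank_orthogonal mySympB_nondeg, hVrank, hC]
  have hDrank : Module.finrank (ZMod 2) (sympOrtho {c : Vn n | c ∈ C ∧ wQ c ≤ d - 1})
      = (n + n) - s := by
    rw [my_sympOrtho_eq, LinearMap.BilinForm.finrank_orthogonal mySympB_nondeg,
      hVrank, hs]
  have hsle : s ≤ n - k := by
    rw [hs, ← hC]
    refine Submodule.finrank_mono ?_
    rw [Submodule.span_le]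
    intro c hc
    exact hc.1
  rw [hHrank, hDrank] at hpack
  calc 2 ^ k * Nat.card Ω * Nat.card {e : Vn n ⧸ sympOrtho (C : Set (Vn n)) | e ∈ Dbar ∧
          qnorm (sympOrtho (C : Set (Vn n))) e ≤ (d - 1) / 2}
      = 2 ^ k * (Nat.card Ω * Nat.card {e : Vn n ⧸ sympOrtho (C : Set (Vn n)) | e ∈ Dbar ∧
          qnorm (sympOrtho (C : Set (Vn n))) e ≤ (d - 1) / 2}) := by ring
    _ ≤ 2 ^ k * 2 ^ ((n + n - s) - (n + n - (n - k))) := Nat.mul_le_mul_left _ hpack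
    _ = 2 ^ (k + ((n + n - s) - (n + n - (n - k)))) := by rw [pow_add]
    _ ≤ 2 ^ (n - s) := Nat.pow_le_pow_right (by norm_num) (by omega)
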